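/- For complex numbers a and b, there exists a monic polynomial Q ∈ ℂ[X] satisfying (X + a)·Q(X) = (X + b)·Q(X + 1) (equality of polynomials) if and only if a − b is a nonnegative integer. -/
import Mathlib


open Polynomial

lemma aux_exists (b : ℂ) (k : ℕ) :
    ∃ Q : Polynomial ℂ, Q.Monic ∧
      (X + C (b + k)) * Q = (X + C b) * (Q.comp (X + 1)) := by
  induction k with
  | zero => exact ⟨1, monic_one, by simp⟩
  | succ k ih =>
    obtain ⟨Q, hm, hQ⟩ := ih
    refine ⟨Q * (X + C (b + k)), hm.mul (monic_X_add_C _), ?_⟩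
    have hc : (C (b + (k + 1 : ℕ)) : Polynomial ℂ) = C (b + k) + 1 := by
      push_cast
      rw [← C_1, ← C_add]
      ring_nf
    have hcomp : ((Q * (X + C (b + k))).comp (X + 1)) =
        Q.comp (X + 1) * (X + C (b + (k + 1 : ℕ))) := by
      rw [mul_comp, add_comp, X_comp, C_comp, hc]
      ring
    rw [hcomp, hc]
    linear_combination (X + C (b + k) + 1) * hQ

/-- For complex numbers `a` and `b`, there exists a monic polynomial `Q ∈ ℂ[X]` with
`(X + a) · Q(X) = (X + b) · Q(X + 1)` if and only if `a - b` is a nonnegative integer. -/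
theorem exists_monic_shift_eq_iff (a b : ℂ) :
    (∃ Q : Polynomial ℂ, Q.Monic ∧ (X + C a) * Q = (X + C b) * (Q.comp (X + 1))) ↔
      ∃ k : ℕ, a - b = (k : ℂ) := by
  constructor
  · rintro ⟨Q, hm, hQ⟩
    by_contra h
    push_neg at h
    have heval : ∀ x : ℂ, (x + a) * Q.eval x = (x + b) * Q.eval (x + 1) := by
      intro x
      have := congrArg (Polynomial.eval x) hQ
      simpa [eval_comp] using this
    have hroot : ∀ n : ℕ, Q.eval (-b - n) = 0 := by
      intro n
      induction n with
      | zero =>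
        have h0 := heval (-b)
        simp only [neg_add_cancel, zero_mul] at h0
        have hne : -b + a ≠ 0 := by
          intro hc
          exact h 0 (by push_cast; linear_combination hc)
        simpa [Nat.cast_zero, sub_zero] using
          (mul_eq_zero.mp h0).resolve_left hne
      | succ n ih =>
        have h1 := heval (-b - (n + 1 : ℕ))
        have hx1 : (-b - (n + 1 : ℕ) + 1 : ℂ) = -b - n := by push_cast; ring
        rw [hx1, ih, mul_zero] at h1
        have hne : (-b - (n + 1 : ℕ) + a : ℂ) ≠ 0 := by
          intro hc
          exact h (n + 1) (by push_cast; push_cast at hc; linear_combination hc)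
        exact (mul_eq_zero.mp h1).resolve_left hne
    have hinf : {x : ℂ | Q.IsRoot x}.Infinite := by
      apply Set.infinite_of_injective_forall_mem (f := fun n : ℕ => -b - n)
      · intro m n hmn
        simp only at hmn
        have : (m : ℂ) = n := by linear_combination -hmn
        exact_mod_cast this
      · intro n
        exact hroot n
    exact hm.ne_zero (eq_zero_of_infinite_isRoot Q hinf)
  · rintro ⟨k, hk⟩
    obtain ⟨Q, hm, hQ⟩ := aux_exists b k
    have ha : a = b + k := by linear_combination hk
    exact ⟨Q, hm, by rw [ha]; exact hQ⟩
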